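/- Let I be a set of atoms closed under the rules: (1) A_{i-1}(x) implies existence of z with R(x,z) and T_i(z) in I; (2) A_{i-1}(x) implies existence of z with R(x,z) and F_i(z); (3) T_i(x) → A_i(x); (4) F_i(x) → A_i(x); (5) A_n(x) implies existence of z with R(x,z) and G(z); together with A_0(a). Then for every function ν : {1,...,n} → Bool there exist terms w_0 = a, w_1, ..., w_{n+1} in I such that A_i(w_i) ∈ I and R(w_i, w_{i+1}) ∈ I for all 0 ≤ i ≤ n, G(w_{n+1}) ∈ I, and for each 1 ≤ i ≤ n, T_i(w_i) ∈ I if ν(i) = true and F_i(w_i) ∈ I if ν(i) = false. -/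
import Mathlib


/-- If the set of atoms `I` (rendered via its characteristic predicates `A`, `Tp`, `Fp`,
`G`, `Rel`) satisfies the closure rules (1)-(5) and contains `A_0(a)`, then for every
truth assignment `ν` there is a path `w_0 = a, w_1, ..., w_{n+1}` realising `ν`. -/
theorem stmt_14 {T : Type*} (n : ℕ) (A Tp Fp : ℕ → T → Prop) (G : T → Prop)
    (Rel : T → T → Prop) (a : T)
    (ha : A 0 a)
    (h1 : ∀ i : ℕ, 1 ≤ i → i ≤ n → ∀ x : T, A (i - 1) x → ∃ z, Rel x z ∧ Tp i z)
    (h2 : ∀ i : ℕ, 1 ≤ i → i ≤ n → ∀ x : T, A (i - 1) x → ∃ z, Rel x z ∧ Fp i z)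
    (h3 : ∀ i : ℕ, 1 ≤ i → i ≤ n → ∀ x : T, Tp i x → A i x)
    (h4 : ∀ i : ℕ, 1 ≤ i → i ≤ n → ∀ x : T, Fp i x → A i x)
    (h5 : ∀ x : T, A n x → ∃ z, Rel x z ∧ G z) :
    ∀ ν : ℕ → Bool, ∃ w : ℕ → T,
      w 0 = a ∧
      (∀ i : ℕ, i ≤ n → A i (w i)) ∧
      (∀ i : ℕ, i ≤ n → Rel (w i) (w (i + 1))) ∧
      G (w (n + 1)) ∧
      (∀ i : ℕ, 1 ≤ i → i ≤ n →
        (ν i = true → Tp i (w i)) ∧ (ν i = false → Fp i (w i))) := by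
  intro ν
  -- auxiliary: build path up to m for every m ≤ n
  have aux : ∀ m : ℕ, m ≤ n → ∃ w : ℕ → T,
      w 0 = a ∧
      (∀ i : ℕ, i ≤ m → A i (w i)) ∧
      (∀ i : ℕ, i < m → Rel (w i) (w (i + 1))) ∧
      (∀ i : ℕ, 1 ≤ i → i ≤ m →
        (ν i = true → Tp i (w i)) ∧ (ν i = false → Fp i (w i))) := by
    intro m
    induction m with
    | zero =>
      intro _
      refine ⟨fun _ => a, rfl, ?_, ?_, ?_⟩
      · intro i hi; interval_cases i; exact ha
      · intro i hi; omega
      · intro i hi hi'; omega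
    | succ m ih =>
      intro hm
      obtain ⟨w, hw0, hwA, hwR, hwTF⟩ := ih (by omega)
      have hAm : A m (w m) := hwA m le_rfl
      have h1' : 1 ≤ m + 1 := by omega
      have hm' : m + 1 ≤ n := hm
      have hsub : (m + 1) - 1 = m := by omega
      have hz : ∃ z, Rel (w m) z ∧
          ((ν (m+1) = true → Tp (m+1) z) ∧ (ν (m+1) = false → Fp (m+1) z)) ∧
          A (m+1) z := by
        cases hν : ν (m+1) with
        | true =>
          obtain ⟨z, hz1, hz2⟩ := h1 (m+1) h1' hm' (w m) (by rwa [hsub])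
          exact ⟨z, hz1, ⟨fun _ => hz2, fun h => by simp [hν] at h⟩,
            h3 (m+1) h1' hm' z hz2⟩
        | false =>
          obtain ⟨z, hz1, hz2⟩ := h2 (m+1) h1' hm' (w m) (by rwa [hsub])
          exact ⟨z, hz1, ⟨fun h => by simp [hν] at h, fun _ => hz2⟩,
            h4 (m+1) h1' hm' z hz2⟩
      obtain ⟨z, hz1, hz2, hz3⟩ := hz
      refine ⟨Function.update w (m+1) z, ?_, ?_, ?_, ?_⟩
      · rw [Function.update_of_ne (by omega)]; exact hw0
      · intro i hi
        rcases Nat.lt_or_ge i (m+1) with h | h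
        · rw [Function.update_of_ne (by omega)]; exact hwA i (by omega)
        · have : i = m + 1 := by omega
          subst this; rw [Function.update_self]; exact hz3
      · intro i hi
        rcases Nat.lt_or_ge i m with h | h
        · rw [Function.update_of_ne (by omega), Function.update_of_ne (by omega)]
          exact hwR i h
        · have : i = m := by omega
          subst this
          rw [Function.update_of_ne (by omega), Function.update_self]
          exact hz1
      · intro i hi1 hi2
        rcases Nat.lt_or_ge i (m+1) with h | h
        · rw [Function.update_of_ne (by omega)]; exact hwTF i hi1 (by omega)
        · have : i = m + 1 := by omega
          subst this; rw [Function.update_self]; exact hz2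
  obtain ⟨w, hw0, hwA, hwR, hwTF⟩ := aux n le_rfl
  obtain ⟨z, hz1, hz2⟩ := h5 (w n) (hwA n le_rfl)
  refine ⟨Function.update w (n+1) z, ?_, ?_, ?_, ?_, ?_⟩
  · rw [Function.update_of_ne (by omega)]; exact hw0
  · intro i hi; rw [Function.update_of_ne (by omega)]; exact hwA i hi
  · intro i hi
    rcases Nat.lt_or_ge i n with h | h
    · rw [Function.update_of_ne (by omega), Function.update_of_ne (by omega)]
      exact hwR i h
    · have : i = n := by omega
      subst this
      rw [Function.update_of_ne (by omega), Function.update_self]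
      exact hz1
  · rw [Function.update_self]; exact hz2
  · intro i hi1 hi2
    rw [Function.update_of_ne (by omega)]; exact hwTF i hi1 hi2
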